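/- Let u be a C² convex function on a bounded convex domain with sub-level sets Ω_t = {u < t}, where Ω_1 has diameter D. Then for any 0 < s < t ≤ 1 and any x ∈ Ω_s: |Du(x)| · ((t-s)/D)^{n-1} ≤ C(n) ∫_{Ω_t} det(D²u) dx for some dimensional constant C(n). -/

import Mathlib

open MeasureTheory Filter Bornology Metric Set
open scoped RealInnerProductSpace ENNReal

noncomputable section

/-- Hessian matrix of `u` at `x`. -/
def hess {n : ℕ} (u : EuclideanSpace ℝ (Fin n) → ℝ) (x : EuclideanSpace ℝ (Fin n)) :
    Matrix (Fin n) (Fin n) ℝ :=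
  fun i j => iteratedFDeriv ℝ 2 u x ![EuclideanSpace.single i 1, EuclideanSpace.single j 1]

/-- `k`-th elementary symmetric function of the eigenvalues of a matrix,
computed as the sum of its principal `k × k` minors. -/
def Smat {n : ℕ} (k : ℕ) (M : Matrix (Fin n) (Fin n) ℝ) : ℝ :=
  ∑ s ∈ Finset.univ.powersetCard k, (M.submatrix (Subtype.val : s → Fin n) Subtype.val).det

section Aux

open Topology InnerProductSpace

variable {n : ℕ} {u : EuclideanSpace ℝ (Fin n) → ℝ}

lemma inner_gradient_apply (u : EuclideanSpace ℝ (Fin n) → ℝ) (x v : EuclideanSpace ℝ (Fin n)) :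
    ⟪gradient u x, v⟫ = fderiv ℝ u x v := by
  rw [gradient]; exact InnerProductSpace.toDual_symm_apply

/-- gradient inequality for convex functions -/
lemma convex_grad_ineq (hu : ContDiff ℝ 2 u) (hc : ConvexOn ℝ Set.univ u)
    (x y : EuclideanSpace ℝ (Fin n)) :
    ⟪gradient u x, y - x⟫ ≤ u y - u x := by
  set v := y - x with hv
  have hdu : Differentiable ℝ u := hu.differentiable (by norm_num)
  have hc' : HasDerivAt (fun τ : ℝ => x + τ • v) v 0 := by
    simpa using ((hasDerivAt_id (0:ℝ)).smul_const v).const_add x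
  have hg : HasDerivAt (fun τ : ℝ => u (x + τ • v)) (fderiv ℝ u x v) 0 := by
    have h0 : HasFDerivAt u (fderiv ℝ u x) (x + (0:ℝ) • v) := by
      simpa using (hdu x).hasFDerivAt
    exact h0.comp_hasDerivAt 0 hc'
  have hcvx : ConvexOn ℝ Set.univ (fun τ : ℝ => u (x + τ • v)) := by
    have := hc.comp_affineMap (AffineMap.lineMap x y)
    have he : (fun τ : ℝ => u (x + τ • v)) = u ∘ (AffineMap.lineMap x y) := by
      funext τ; simp [AffineMap.lineMap_apply, hv, add_comm]
    rw [he]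
    simpa using this
  have := hcvx.le_slope_of_hasDerivAt (mem_univ (0:ℝ)) (mem_univ (1:ℝ)) zero_lt_one hg
  rw [inner_gradient_apply]
  have hxy : x + v = y := by rw [hv]; abel
  simpa [slope, hxy] using this

lemma hess_quadratic_nonneg (hu : ContDiff ℝ 2 u) (hc : ConvexOn ℝ Set.univ u)
    (x v : EuclideanSpace ℝ (Fin n)) :
    0 ≤ fderiv ℝ (fderiv ℝ u) x v v := by
  have hdu : Differentiable ℝ u := hu.differentiable (by norm_num)
  have hdf : Differentiable ℝ (fderiv ℝ u) :=
    (hu.fderiv_right (m := 1) (by norm_num)).differentiable (by norm_num)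
  set g : ℝ → ℝ := fun τ => u (x + τ • v) with hgdef
  set g' : ℝ → ℝ := fun τ => fderiv ℝ u (x + τ • v) v with hg'def
  have hc' : ∀ τ : ℝ, HasDerivAt (fun σ : ℝ => x + σ • v) v τ := fun τ => by
    simpa using ((hasDerivAt_id τ).smul_const v).const_add x
  have hg : ∀ τ : ℝ, HasDerivAt g (g' τ) τ := fun τ =>
    (hdu _).hasFDerivAt.comp_hasDerivAt τ (hc' τ)
  have hcvx : ConvexOn ℝ Set.univ g := by
    have := hc.comp_affineMap (AffineMap.lineMap x (x + v))
    have he : g = u ∘ (AffineMap.lineMap x (x + v)) := by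
      funext τ; simp [AffineMap.lineMap_apply, hgdef, add_comm]
    rw [he]; simpa using this
  have hmono : Monotone g' := by
    intro a b hab
    rcases eq_or_lt_of_le hab with rfl | hab
    · exact le_rfl
    calc g' a ≤ slope g a b :=
          hcvx.le_slope_of_hasDerivAt (mem_univ a) (mem_univ b) hab (hg a)
      _ ≤ g' b := hcvx.slope_le_of_hasDerivAt (mem_univ a) (mem_univ b) hab (hg b)
  have hg'' : HasDerivAt g' (fderiv ℝ (fderiv ℝ u) x v v) 0 := by
    have h1 : HasFDerivAt (fderiv ℝ u) (fderiv ℝ (fderiv ℝ u) x) (x + (0:ℝ) • v) := by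
      simpa using (hdf x).hasFDerivAt
    have h2 := ((ContinuousLinearMap.apply ℝ ℝ v).hasFDerivAt.comp _ h1).comp_hasDerivAt 0 (hc' 0)
    exact h2
  have hT : Tendsto (slope g' 0) (𝓝[>] (0:ℝ)) (𝓝 (fderiv ℝ (fderiv ℝ u) x v v)) :=
    (hasDerivAt_iff_tendsto_slope.mp hg'').mono_left
      (nhdsWithin_mono 0 fun y hy => ne_of_gt hy)
  refine ge_of_tendsto hT ?_
  filter_upwards [self_mem_nhdsWithin] with τ hτ
  rw [mem_Ioi] at hτ
  have : g' 0 ≤ g' τ := hmono hτ.le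
  have h2 : 0 ≤ g' τ - g' 0 := sub_nonneg.mpr this
  rw [slope_def_field]
  have : (0:ℝ) ≤ (g' τ - g' 0) / (τ - 0) := div_nonneg h2 (by linarith)
  simpa using this

lemma hess_apply (u : EuclideanSpace ℝ (Fin n) → ℝ) (x : EuclideanSpace ℝ (Fin n)) (i j : Fin n) :
    hess u x i j
      = fderiv ℝ (fderiv ℝ u) x (EuclideanSpace.single i 1) (EuclideanSpace.single j 1) := by
  rw [hess, iteratedFDeriv_two_apply]
  simp

lemma hess_symm (hu : ContDiff ℝ 2 u) (x : EuclideanSpace ℝ (Fin n))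
    (v w : EuclideanSpace ℝ (Fin n)) :
    fderiv ℝ (fderiv ℝ u) x v w = fderiv ℝ (fderiv ℝ u) x w v := by
  have hdu : Differentiable ℝ u := hu.differentiable (by norm_num)
  have hdf : Differentiable ℝ (fderiv ℝ u) :=
    (hu.fderiv_right (m := 1) (by norm_num)).differentiable (by norm_num)
  exact second_derivative_symmetric (fun y => (hdu y).hasFDerivAt) ((hdf x).hasFDerivAt) v w

lemma hess_posSemidef (hu : ContDiff ℝ 2 u) (hc : ConvexOn ℝ Set.univ u)
    (x : EuclideanSpace ℝ (Fin n)) : (hess u x).PosSemidef := by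
  constructor
  · ext i j
    simp only [Matrix.conjTranspose_apply, star_trivial, hess_apply]
    exact hess_symm hu x _ _
  · intro y
    have key : (0:ℝ) ≤ fderiv ℝ (fderiv ℝ u) x (∑ i, y i • EuclideanSpace.single i 1)
        (∑ j, y j • EuclideanSpace.single j 1) := hess_quadratic_nonneg hu hc x _
    have expand : fderiv ℝ (fderiv ℝ u) x (∑ i, y i • EuclideanSpace.single i 1)
        (∑ j, y j • EuclideanSpace.single j 1)
        = ∑ i, ∑ j, y i * (y j * hess u x i j) := by
      simp only [map_sum, _root_.map_smul, ContinuousLinearMap.sum_apply,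
        ContinuousLinearMap.smul_apply, smul_eq_mul, Finset.sum_apply, hess_apply]
      rw [Finset.sum_comm]
      refine Finset.sum_congr rfl fun i _ => ?_
      rw [Finset.mul_sum]
      exact Finset.sum_congr rfl fun j _ => by ring
    rw [expand] at key
    simpa [Finsupp.sum_fintype, dotProduct, Matrix.mulVec, Finset.mul_sum, mul_comm, mul_left_comm] using key

lemma hess_det_nonneg (hu : ContDiff ℝ 2 u) (hc : ConvexOn ℝ Set.univ u)
    (x : EuclideanSpace ℝ (Fin n)) : 0 ≤ (hess u x).det := by
  have h := hess_posSemidef hu hc x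
  rw [h.isHermitian.det_eq_prod_eigenvalues]
  refine Finset.prod_nonneg fun i _ => ?_
  simpa using h.eigenvalues_nonneg i

lemma hess_det_continuous (hu : ContDiff ℝ 2 u) :
    Continuous fun y => (hess u y).det := by
  apply Continuous.matrix_det
  apply continuous_matrix
  intro i j
  exact (continuous_eval_const _).comp
    (hu.continuous_iteratedFDeriv le_rfl)

/-- derivative of the gradient map -/
def gradDeriv (u : EuclideanSpace ℝ (Fin n) → ℝ) (y : EuclideanSpace ℝ (Fin n)) :
    EuclideanSpace ℝ (Fin n) →L[ℝ] EuclideanSpace ℝ (Fin n) :=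
  ∑ i, ((fderiv ℝ (fderiv ℝ u) y).flip (EuclideanSpace.single i 1)).smulRight
    (EuclideanSpace.single i 1)

lemma gradient_eq_sum (u : EuclideanSpace ℝ (Fin n) → ℝ) :
    gradient u = fun z => ∑ i, (fderiv ℝ u z (EuclideanSpace.single i 1)) •
      EuclideanSpace.single i 1 := by
  funext z
  have := (EuclideanSpace.basisFun (Fin n) ℝ).sum_repr (gradient u z)
  rw [← this]
  refine Finset.sum_congr rfl fun i _ => ?_
  rw [EuclideanSpace.basisFun_repr, EuclideanSpace.basisFun_apply]
  congr 1
  rw [← inner_gradient_apply]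
  have : ⟪gradient u z, EuclideanSpace.single i (1:ℝ)⟫ = gradient u z i := by
    rw [EuclideanSpace.inner_single_right]; simp
  rw [this]

lemma hasFDerivAt_gradient (hu : ContDiff ℝ 2 u) (y : EuclideanSpace ℝ (Fin n)) :
    HasFDerivAt (gradient u) (gradDeriv u y) y := by
  have hdf : Differentiable ℝ (fderiv ℝ u) :=
    (hu.fderiv_right (m := 1) (by norm_num)).differentiable (by norm_num)
  rw [gradient_eq_sum, gradDeriv]
  refine HasFDerivAt.fun_sum fun i _ => ?_
  have h1 : HasFDerivAt (fun z => fderiv ℝ u z (EuclideanSpace.single i 1))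
      ((fderiv ℝ (fderiv ℝ u) y).flip (EuclideanSpace.single i 1)) y := by
    have h2 := (ContinuousLinearMap.apply ℝ ℝ
        (EuclideanSpace.single i (1:ℝ))).hasFDerivAt.comp y (hdf y).hasFDerivAt
    have h3 : (ContinuousLinearMap.apply ℝ ℝ (EuclideanSpace.single i (1:ℝ))).comp
        (fderiv ℝ (fderiv ℝ u) y)
        = (fderiv ℝ (fderiv ℝ u) y).flip (EuclideanSpace.single i 1) := by
      ext w; rfl
    rwa [h3] at h2
  exact h1.smul_const _

lemma gradDeriv_det (hu : ContDiff ℝ 2 u) (y : EuclideanSpace ℝ (Fin n)) :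
    (gradDeriv u y).det = (hess u y).det := by
  have h0 : (gradDeriv u y).det
      = LinearMap.det
        ((gradDeriv u y) : EuclideanSpace ℝ (Fin n) →ₗ[ℝ] EuclideanSpace ℝ (Fin n)) := rfl
  rw [h0, ← LinearMap.det_toMatrix (PiLp.basisFun 2 ℝ (Fin n))]
  congr 1
  ext i j
  rw [LinearMap.toMatrix_apply]
  simp only [PiLp.basisFun_repr, PiLp.basisFun_apply, ContinuousLinearMap.coe_coe]
  rw [hess_apply, hess_symm hu]
  rw [gradDeriv]
  simp only [ContinuousLinearMap.sum_apply, ContinuousLinearMap.smulRight_apply,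
    ContinuousLinearMap.flip_apply]
  have key : ∀ k : Fin n, ((fderiv ℝ (fderiv ℝ u) y (PiLp.single 2 j 1)
      (EuclideanSpace.single k 1)) • EuclideanSpace.single k (1:ℝ)) i
      = (fderiv ℝ (fderiv ℝ u) y (PiLp.single 2 j 1)
      (EuclideanSpace.single k 1)) * (if i = k then 1 else 0) := by
    intro k
    rw [PiLp.smul_apply, smul_eq_mul, EuclideanSpace.single_apply]
  have hsum : (∑ k : Fin n, ((fderiv ℝ (fderiv ℝ u) y (PiLp.single 2 j 1)
      (EuclideanSpace.single k 1)) • EuclideanSpace.single k (1:ℝ))) i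
      = ∑ k : Fin n, ((fderiv ℝ (fderiv ℝ u) y (PiLp.single 2 j 1)
      (EuclideanSpace.single k 1)) • EuclideanSpace.single k (1:ℝ)) i := by
    induction (Finset.univ : Finset (Fin n)) using Finset.induction with
    | empty => rfl
    | insert _ _ hx ih => rw [Finset.sum_insert hx, Finset.sum_insert hx, ← ih]; rfl
  rw [hsum]
  simp_rw [key]
  simp only [mul_ite, mul_one, mul_zero, Finset.sum_ite_eq, Finset.mem_univ, if_true]

end Aux

theorem gradient_estimate_by_hessian_integral (n : ℕ) (hn : 0 < n) :
    ∃ C > (0:ℝ), ∀ u : EuclideanSpace ℝ (Fin n) → ℝ,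
      ContDiff ℝ 2 u → ConvexOn ℝ Set.univ u →
      IsBounded {x | u x < 1} → Convex ℝ {x | u x < 1} →
      ∀ s t : ℝ, 0 < s → s < t → t ≤ 1 →
        ∀ x : EuclideanSpace ℝ (Fin n), u x < s →
          ‖gradient u x‖ * ((t - s) / Metric.diam {y | u y < 1}) ^ (n - 1) ≤
            C * ∫ y in {y | u y < t}, (hess u y).det := by
  haveI : Nonempty (Fin n) := ⟨⟨0, hn⟩⟩
  set V : ℝ≥0∞ := volume (ball (0 : EuclideanSpace ℝ (Fin n)) 1) with hV
  have hVpos : 0 < V := measure_ball_pos _ _ one_pos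
  have hVlt : V < ⊤ := measure_ball_lt_top
  set v : ℝ := V.toReal with hv
  have hvpos : 0 < v := ENNReal.toReal_pos hVpos.ne' hVlt.ne
  refine ⟨8 ^ n / v, by positivity, ?_⟩
  intro u hu hcvx hbdd hconv s t hs hst ht1 x hxs
  have hdu : Differentiable ℝ u := hu.differentiable (by norm_num)
  have hucont : Continuous u := hu.continuous
  set Ω₁ : Set (EuclideanSpace ℝ (Fin n)) := {y | u y < 1} with hΩ₁
  set Ωt : Set (EuclideanSpace ℝ (Fin n)) := {y | u y < t} with hΩt
  have hopen1 : IsOpen Ω₁ := isOpen_lt hucont continuous_const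
  have hopent : IsOpen Ωt := isOpen_lt hucont continuous_const
  have hΩsub : Ωt ⊆ Ω₁ := fun y hy => lt_of_lt_of_le hy ht1
  have hxt : u x < t := lt_trans hxs hst
  have hx1 : x ∈ Ω₁ := lt_of_lt_of_le hxt ht1
  set D : ℝ := Metric.diam Ω₁ with hD
  -- positivity of the diameter
  have hDpos : 0 < D := by
    obtain ⟨ε, hε, hball⟩ := Metric.isOpen_iff.mp hopen1 x hx1
    set w : EuclideanSpace ℝ (Fin n) := (ε/2) • EuclideanSpace.single (⟨0, hn⟩ : Fin n) (1:ℝ)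
      with hw
    have hwn : ‖w‖ = ε/2 := by
      rw [hw, norm_smul, EuclideanSpace.norm_single]
      simp [abs_of_pos, hε, abs_of_nonneg (by linarith : (0:ℝ) ≤ ε/2)]
    have hmem : x + w ∈ ball x ε := by
      rw [mem_ball, dist_eq_norm, add_sub_cancel_left, hwn]
      linarith
    have := dist_le_diam_of_mem hbdd (hball hmem) (hball (mem_ball_self hε))
    rw [dist_eq_norm, add_sub_cancel_left, hwn] at this
    rw [hD]
    linarith
  set r : ℝ := (t - s) / D with hr
  have hrpos : 0 < r := div_pos (by linarith) hDpos
  set p : EuclideanSpace ℝ (Fin n) := gradient u x with hp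
  set m : ℝ := ‖p‖ with hm
  set I : ℝ := ∫ y in Ωt, (hess u y).det with hI
  have hdet0 : ∀ y, 0 ≤ (hess u y).det := fun y => hess_det_nonneg hu hcvx y
  have hI0 : 0 ≤ I := setIntegral_nonneg hopent.measurableSet fun y _ => hdet0 y
  rcases eq_or_lt_of_le (norm_nonneg p) with hm0 | hmpos
  · have hm' : m = 0 := by rw [hm, ← hm0]
    rw [hm', zero_mul]
    exact mul_nonneg (by positivity) hI0
  -- main case
  set K : Set (EuclideanSpace ℝ (Fin n)) := closure Ωt with hK
  have hKb : IsBounded K := (hbdd.subset hΩsub).closure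
  have hKc : IsCompact K := Metric.isCompact_of_isClosed_isBounded isClosed_closure hKb
  have hxK : x ∈ K := subset_closure hxt
  have hKle : ∀ y ∈ K, u y ≤ t := fun y hy =>
    (closure_minimal (fun z (hz : u z < t) => le_of_lt hz)
      (isClosed_le hucont continuous_const)) hy
  have hKD : ∀ y ∈ K, ‖y - x‖ ≤ D := by
    intro y hy
    have h1 : y ∈ closure Ω₁ := closure_mono hΩsub hy
    have h2 : x ∈ closure Ω₁ := subset_closure hx1
    have h3 := dist_le_diam_of_mem hbdd.closure h1 h2
    rw [Metric.diam_closure] at h3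
    rw [hD, ← dist_eq_norm]
    exact h3
  set S : Set (EuclideanSpace ℝ (Fin n)) :=
    {ξ | ∀ y ∈ K, ⟪ξ, y - x⟫ < t - u x} with hS
  -- balls inside S
  have hballS : ∀ l : ℝ, 0 ≤ l → l < 1 → ball (l • p) ((1 - l) * r) ⊆ S := by
    intro l hl0 hl1 ξ hξ y hy
    rw [mem_ball, dist_eq_norm] at hξ
    have h1 : ⟪ξ - l • p, y - x⟫ ≤ ‖ξ - l • p‖ * D :=
      (real_inner_le_norm _ _).trans
        (mul_le_mul_of_nonneg_left (hKD y hy) (norm_nonneg _))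
    have h2 : ‖ξ - l • p‖ * D < (1 - l) * r * D :=
      mul_lt_mul_of_pos_right hξ hDpos
    have h3 : r * D = t - s := div_mul_cancel₀ _ hDpos.ne'
    have h4 : ⟪p, y - x⟫ ≤ t - u x := by
      have := convex_grad_ineq hu hcvx x y
      have h5 := hKle y hy
      rw [← hp] at this
      linarith
    have h6 : ⟪l • p, y - x⟫ ≤ l * (t - u x) := by
      rw [real_inner_smul_left]
      exact mul_le_mul_of_nonneg_left h4 hl0
    have h7 : ⟪ξ, y - x⟫ = ⟪ξ - l • p, y - x⟫ + ⟪l • p, y - x⟫ := by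
      rw [inner_sub_left]; ring
    have h8 : (1 - l) * r * D = (1 - l) * (t - s) := by rw [mul_assoc, h3]
    have hux : u x < s := hxs
    have h9 : (1 - l) * (t - s) ≤ (1 - l) * (t - u x) :=
      mul_le_mul_of_nonneg_left (by linarith) (by linarith)
    show ⟪ξ, y - x⟫ < t - u x
    linarith [h1, h2, h6, h7, h8, h9]
  -- S consists of gradients
  have hSsub : S ⊆ gradient u '' Ωt := by
    intro ξ hξ
    set g : EuclideanSpace ℝ (Fin n) → ℝ := fun y => u y - (innerSL ℝ ξ) y with hg
    have hgc : Continuous g := hucont.sub (innerSL ℝ ξ).continuous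

    obtain ⟨y₀, hy₀K, hmin⟩ := hKc.exists_isMinOn ⟨x, hxK⟩ hgc.continuousOn
    have hkey : u y₀ - u x ≤ ⟪ξ, y₀ - x⟫ := by
      have h5 : u y₀ - ⟪ξ, y₀⟫ ≤ u x - ⟪ξ, x⟫ := hmin hxK
      rw [inner_sub_right]
      linarith
    have hy₀t : u y₀ < t := by
      have := hξ y₀ hy₀K
      linarith
    have hloc : IsLocalMin g y₀ :=
      hmin.isLocalMin (mem_of_superset (hopent.mem_nhds hy₀t) subset_closure)
    have hfd : fderiv ℝ g y₀ = 0 := hloc.fderiv_eq_zero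
    have hfd2 : fderiv ℝ u y₀ = innerSL ℝ ξ := by
      have hdiff : DifferentiableAt ℝ (fun y => (innerSL ℝ ξ) y) y₀ :=
        (innerSL ℝ ξ).differentiableAt
      have := fderiv_fun_sub (hdu y₀) hdiff
      rw [← hg] at this
      rw [hfd, (innerSL ℝ ξ).fderiv] at this
      have h0 : fderiv ℝ u y₀ - innerSL ℝ ξ = 0 := this.symm
      rwa [sub_eq_zero] at h0
    refine ⟨y₀, hy₀t, ?_⟩
    refine ext_inner_right ℝ fun w => ?_
    rw [inner_gradient_apply, hfd2]
    simp
  -- counting disjoint balls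
  set N : ℕ := ⌈m / r⌉₊ with hN
  have hNge : m / r ≤ (N : ℝ) := Nat.le_ceil _
  have hNlt : (N : ℝ) < m / r + 1 := Nat.ceil_lt_add_one (by positivity)
  set c : ℕ → EuclideanSpace ℝ (Fin n) := fun k => ((k : ℝ) * (r / (2 * m))) • p with hc
  have hckS : ∀ k < N, ball (c k) (r / 8) ⊆ S := by
    intro k hk
    set l : ℝ := (k : ℝ) * (r / (2 * m)) with hl
    have hl0 : 0 ≤ l := by positivity
    have hl12 : l < 1 / 2 := by
      have hk' : (k : ℝ) ≤ (N : ℝ) - 1 := by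
        have : (k : ℝ) + 1 ≤ N := by exact_mod_cast Nat.succ_le_of_lt hk
        linarith
      have hk2 : (k : ℝ) < m / r := by linarith
      calc l = (k:ℝ) * (r / (2 * m)) := hl
        _ < (m / r) * (r / (2 * m)) := by
            apply mul_lt_mul_of_pos_right hk2
            positivity
        _ = 1 / 2 := by field_simp [show m ≠ 0 from hmpos.ne']
    refine subset_trans (ball_subset_ball ?_) (hballS l hl0 (by linarith))
    have h9 : (1/2:ℝ) * r ≤ (1 - l) * r := mul_le_mul_of_nonneg_right (by linarith) hrpos.le
    linarith [hrpos]
  have hdisj : ∀ k ∈ Finset.range N, ∀ k' ∈ Finset.range N, k ≠ k' →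
      Disjoint (ball (c k) (r/8)) (ball (c k') (r/8)) := by
    intro k _ k' _ hkk'
    apply ball_disjoint_ball
    have h1 : dist (c k) (c k') = |(k:ℝ) - (k':ℝ)| * (r / (2*m)) * m := by
      rw [dist_eq_norm, hc]
      rw [← sub_smul, norm_smul, ← hm]
      rw [Real.norm_eq_abs, ← sub_mul, abs_mul]
      rw [abs_of_pos (by positivity : (0:ℝ) < r / (2*m))]
    have h2 : (1:ℝ) ≤ |(k:ℝ) - (k':ℝ)| := by
      have hne : (k:ℤ) ≠ (k':ℤ) := by exact_mod_cast hkk'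
      have hz : (1:ℤ) ≤ |(k:ℤ) - (k':ℤ)| := Int.one_le_abs (sub_ne_zero.mpr hne)
      have hz2 : ((1:ℤ):ℝ) ≤ ((|(k:ℤ) - (k':ℤ)| : ℤ) : ℝ) := by exact_mod_cast hz
      rw [Int.cast_abs] at hz2
      push_cast at hz2
      simpa using hz2
    have hmne : m ≠ 0 := by rw [hm]; exact hmpos.ne'
    have hmnn : (0:ℝ) < m := by rw [hm]; exact hmpos
    have hq : (r / (2*m)) * m = r / 2 := by
      field_simp
    have h3 : r / 2 ≤ |(k:ℝ) - (k':ℝ)| * (r / (2*m)) * m := by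
      calc r/2 = 1 * ((r / (2*m)) * m) := by rw [hq]; ring
        _ ≤ |(k:ℝ) - (k':ℝ)| * ((r / (2*m)) * m) := by
            apply mul_le_mul_of_nonneg_right h2
            rw [hq]; linarith [hrpos]
        _ = |(k:ℝ) - (k':ℝ)| * (r / (2*m)) * m := by ring
    rw [h1]
    linarith [h3, hrpos]
  -- volume lower bound
  have hlow : (N : ℝ≥0∞) * (ENNReal.ofReal ((r/8)^n) * V) ≤ volume S := by
    have hball_vol : ∀ k : ℕ, volume (ball (c k) (r/8))
        = ENNReal.ofReal ((r/8)^n) * V := by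
      intro k
      rw [Measure.addHaar_ball volume (c k) (by positivity : (0:ℝ) ≤ r/8),
        finrank_euclideanSpace_fin]
    calc (N : ℝ≥0∞) * (ENNReal.ofReal ((r/8)^n) * V)
        = ∑ k ∈ Finset.range N, volume (ball (c k) (r/8)) := by
          simp [hball_vol, Finset.sum_const, Finset.card_range, nsmul_eq_mul]
      _ = volume (⋃ k ∈ Finset.range N, ball (c k) (r/8)) :=
          (measure_biUnion_finset (fun k hk k' hk' h => hdisj k hk k' hk' h)
            (fun _ _ => measurableSet_ball)).symm
      _ ≤ volume S := by
          apply measure_mono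
          exact iUnion₂_subset fun k hk => hckS k (Finset.mem_range.mp hk)
  -- integrability
  have hInt : IntegrableOn (fun y => (hess u y).det) Ωt := by
    have h1 : IntegrableOn (fun y => (hess u y).det) K :=
      ((hess_det_continuous hu).continuousOn).integrableOn_compact hKc
    exact h1.mono_set subset_closure
  -- volume upper bound
  have hup : volume S ≤ ENNReal.ofReal I := by
    calc volume S ≤ volume (gradient u '' Ωt) := measure_mono hSsub
      _ ≤ ∫⁻ y in Ωt, ENNReal.ofReal |(gradDeriv u y).det| :=
          addHaar_image_le_lintegral_abs_det_fderiv volume hopent.measurableSet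
            (fun y _ => (hasFDerivAt_gradient hu y).hasFDerivWithinAt)
      _ = ∫⁻ y in Ωt, ENNReal.ofReal ((hess u y).det) := by
          apply lintegral_congr
          intro y
          rw [gradDeriv_det hu, abs_of_nonneg (hdet0 y)]
      _ = ENNReal.ofReal I :=
          (ofReal_integral_eq_lintegral_ofReal hInt
            (Filter.Eventually.of_forall fun y => hdet0 y)).symm
  have hfin := hlow.trans hup
  -- convert to reals
  have hreal : (N : ℝ) * ((r/8)^n * v) ≤ I := by
    have h1 := ENNReal.toReal_mono ENNReal.ofReal_ne_top hfin
    rw [ENNReal.toReal_ofReal hI0] at h1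
    rw [ENNReal.toReal_mul, ENNReal.toReal_mul, ENNReal.toReal_natCast,
      ENNReal.toReal_ofReal (by positivity)] at h1
    exact h1
  have hr2 : m / r * ((r/8)^n * v) ≤ I :=
    le_trans (mul_le_mul_of_nonneg_right hNge (by positivity)) hreal
  have hkey : m / r * ((r/8)^n * v) = m * r^(n-1) * v / 8^n := by
    have hrn : r ^ n = r ^ (n-1) * r := by
      conv_lhs => rw [← Nat.succ_pred_eq_of_pos hn]
      rw [pow_succ, Nat.pred_eq_sub_one]
    rw [div_pow, hrn]
    field_simp
  rw [hkey] at hr2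
  have h8 : (0:ℝ) < 8^n := by positivity
  rw [div_le_iff₀ h8] at hr2
  rw [div_mul_eq_mul_div, le_div_iff₀ hvpos]
  linarith [hr2]

end
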